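/- arXiv:2501.07512 — 2 statements merged into one kernel-verified Lean document; each statement's English description precedes it below -/
import Mathlib

section
/- For all integers g ≥ 4, the quantity E := [coefficient of c₂·x^{g-1} in (1+x)^{2g-2}·exp(c₂·x(x²-4x+1)/(1+x)⁴)] minus [coefficient of c₂·x^{g-3} in the same series] equals -4(2g-5)(g+3)·(2g-6)!/(g!·(g-3)!); in particular this quantity is nonzero. Equivalently, writing in terms of binomial coefficients, (C(2g-6, g-4) - 4·C(2g-6, g-3) + C(2g-6, g-2)) - (C(2g-6, g-6) - 4·C(2g-6, g-5) + C(2g-6, g-4)) = -4(2g-5)(g+3)·(2g-6)!/(g!·(g-3)!) ≠ 0. -/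
def chQ (m : ℕ) (j : ℤ) : ℚ := if 0 ≤ j then (m.choose j.toNat : ℚ) else 0

lemma key (m : ℕ) :
    (((2*m+6).choose (m+2) : ℚ) - 4*((2*m+6).choose (m+3) : ℚ) + ((2*m+6).choose (m+4) : ℚ))
    - (((2*m+6).choose m : ℚ) - 4*((2*m+6).choose (m+1) : ℚ) + ((2*m+6).choose (m+2) : ℚ))
    = -4*(2*(m:ℚ)+7)*((m:ℚ)+9)*((2*m+6).factorial : ℚ)
        / (((m+6).factorial : ℚ) * ((m+3).factorial : ℚ)) := by
  have h0 : m ≤ 2*m+6 := by omega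
  have h1 : m+1 ≤ 2*m+6 := by omega
  have h2 : m+2 ≤ 2*m+6 := by omega
  have h3 : m+3 ≤ 2*m+6 := by omega
  have h4 : m+4 ≤ 2*m+6 := by omega
  rw [Nat.cast_choose ℚ h0, Nat.cast_choose ℚ h1, Nat.cast_choose ℚ h2,
    Nat.cast_choose ℚ h3, Nat.cast_choose ℚ h4]
  have e0 : 2*m+6-m = m+6 := by omega
  have e1 : 2*m+6-(m+1) = m+5 := by omega
  have e2 : 2*m+6-(m+2) = m+4 := by omega
  have e3 : 2*m+6-(m+3) = m+3 := by omega
  have e4 : 2*m+6-(m+4) = m+2 := by omega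
  rw [e0, e1, e2, e3, e4]
  have f6 : ((m+6).factorial : ℚ) = (m+6)*(m+5)*(m+4)*(m+3)*(m+2)*(m+1)*(m.factorial) := by
    push_cast [show m+6 = (m+5)+1 from rfl, show m+5 = (m+4)+1 from rfl,
      show m+4 = (m+3)+1 from rfl, show m+3 = (m+2)+1 from rfl,
      show m+2 = (m+1)+1 from rfl, Nat.factorial_succ]
    ring
  have f5 : ((m+5).factorial : ℚ) = (m+5)*(m+4)*(m+3)*(m+2)*(m+1)*(m.factorial) := by
    push_cast [show m+5 = (m+4)+1 from rfl, show m+4 = (m+3)+1 from rfl,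
      show m+3 = (m+2)+1 from rfl, show m+2 = (m+1)+1 from rfl, Nat.factorial_succ]
    ring
  have f4 : ((m+4).factorial : ℚ) = (m+4)*(m+3)*(m+2)*(m+1)*(m.factorial) := by
    push_cast [show m+4 = (m+3)+1 from rfl, show m+3 = (m+2)+1 from rfl,
      show m+2 = (m+1)+1 from rfl, Nat.factorial_succ]
    ring
  have f3 : ((m+3).factorial : ℚ) = (m+3)*(m+2)*(m+1)*(m.factorial) := by
    push_cast [show m+3 = (m+2)+1 from rfl, show m+2 = (m+1)+1 from rfl, Nat.factorial_succ]
    ring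
  have f2 : ((m+2).factorial : ℚ) = (m+2)*(m+1)*(m.factorial) := by
    push_cast [show m+2 = (m+1)+1 from rfl, Nat.factorial_succ]
    ring
  have f1 : ((m+1).factorial : ℚ) = (m+1)*(m.factorial) := by
    push_cast [Nat.factorial_succ]; ring
  rw [f6, f5, f4, f3, f2, f1]
  have hm : (m.factorial : ℚ) ≠ 0 := by positivity
  have hp1 : ((m:ℚ)+1) ≠ 0 := by positivity
  have hp2 : ((m:ℚ)+2) ≠ 0 := by positivity
  have hp3 : ((m:ℚ)+3) ≠ 0 := by positivity
  have hp4 : ((m:ℚ)+4) ≠ 0 := by positivity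
  have hp5 : ((m:ℚ)+5) ≠ 0 := by positivity
  have hp6 : ((m:ℚ)+6) ≠ 0 := by positivity
  field_simp
  ring

lemma chQ_nat (M k : ℕ) (j : ℤ) (h : j = (k : ℤ)) : chQ M j = (M.choose k : ℚ) := by
  simp [chQ, h]

/-- For `g ≥ 4`, the difference of the coefficients of `c₂·x^{g-1}` and
`c₂·x^{g-3}` in `(1+x)^{2g-2}·exp(c₂·x(x²-4x+1)/(1+x)⁴)`, written in terms of binomial
coefficients (the coefficient of `c₂·x^k` being `C(2g-6,k-3) - 4C(2g-6,k-2) + C(2g-6,k-1)`),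
equals `-4(2g-5)(g+3)·(2g-6)!/(g!(g-3)!)`; in particular it is nonzero. -/
theorem hyperelliptic_degree_two_coefficient (g : ℕ) (hg : 4 ≤ g) :
    ((chQ (2 * g - 6) ((g : ℤ) - 4) - 4 * chQ (2 * g - 6) ((g : ℤ) - 3)
        + chQ (2 * g - 6) ((g : ℤ) - 2))
      - (chQ (2 * g - 6) ((g : ℤ) - 6) - 4 * chQ (2 * g - 6) ((g : ℤ) - 5)
        + chQ (2 * g - 6) ((g : ℤ) - 4)))
      = -4 * (2 * (g : ℚ) - 5) * ((g : ℚ) + 3) * ((2 * g - 6).factorial : ℚ)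
          / ((g.factorial : ℚ) * ((g - 3).factorial : ℚ))
    ∧ ((chQ (2 * g - 6) ((g : ℤ) - 4) - 4 * chQ (2 * g - 6) ((g : ℤ) - 3)
        + chQ (2 * g - 6) ((g : ℤ) - 2))
      - (chQ (2 * g - 6) ((g : ℤ) - 6) - 4 * chQ (2 * g - 6) ((g : ℤ) - 5)
        + chQ (2 * g - 6) ((g : ℤ) - 4))) ≠ 0 := by
  have heq : ((chQ (2 * g - 6) ((g : ℤ) - 4) - 4 * chQ (2 * g - 6) ((g : ℤ) - 3)
        + chQ (2 * g - 6) ((g : ℤ) - 2))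
      - (chQ (2 * g - 6) ((g : ℤ) - 6) - 4 * chQ (2 * g - 6) ((g : ℤ) - 5)
        + chQ (2 * g - 6) ((g : ℤ) - 4)))
      = -4 * (2 * (g : ℚ) - 5) * ((g : ℚ) + 3) * ((2 * g - 6).factorial : ℚ)
          / ((g.factorial : ℚ) * ((g - 3).factorial : ℚ)) := by
    rcases Nat.lt_or_ge g 6 with h6 | h6
    · interval_cases g
      · norm_num [chQ, Nat.factorial, show ((2:ℤ)).toNat = 2 from rfl,
          show ((3:ℤ)).toNat = 3 from rfl, Nat.choose]
      · norm_num [chQ, Nat.factorial, show ((2:ℤ)).toNat = 2 from rfl,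
          show ((3:ℤ)).toNat = 3 from rfl, Nat.choose]
    · obtain ⟨m, rfl⟩ : ∃ m, g = m + 6 := ⟨g - 6, by omega⟩
      rw [show 2 * (m+6) - 6 = 2*m+6 by omega, show (m+6) - 3 = m+3 by omega,
        chQ_nat _ (m+2) _ (by push_cast; ring), chQ_nat _ (m+3) _ (by push_cast; ring),
        chQ_nat _ (m+4) _ (by push_cast; ring), chQ_nat _ m _ (by push_cast; ring),
        chQ_nat _ (m+1) _ (by push_cast; ring)]
      rw [key m]
      push_cast
      ring
  refine ⟨heq, ?_⟩
  rw [heq]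
  have hg' : (4:ℚ) ≤ (g:ℚ) := by exact_mod_cast hg
  have h1 : (0:ℚ) < 2 * (g:ℚ) - 5 := by linarith
  have h2 : (0:ℚ) < (g:ℚ) + 3 := by linarith
  have h3 : (0:ℚ) < ((2*g-6).factorial : ℚ) := by positivity
  have h4 : (0:ℚ) < (g.factorial : ℚ) * ((g-3).factorial : ℚ) := by positivity
  have : -4 * (2 * (g : ℚ) - 5) * ((g : ℚ) + 3) * ((2 * g - 6).factorial : ℚ)
          / ((g.factorial : ℚ) * ((g - 3).factorial : ℚ)) < 0 := by
    apply div_neg_of_neg_of_pos _ h4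
    nlinarith [mul_pos (mul_pos h1 h2) h3]
  exact ne_of_lt this
end

section
/- For all integers g ≥ 4 and 2 ≤ t ≤ g/2, the inequality B_{t-1}·B_{g-t} + B_t·B_{g-t-1} - 2^{g-1} < B_{g-1} holds, where B_k = C(2k,k) is the middle binomial coefficient. -/
/-- The middle (central) binomial coefficient `B_k = C(2k, k)`. -/
def midBinom (k : ℕ) : ℕ := (2 * k).choose k

lemma midBinom_eq (k : ℕ) : midBinom k = Nat.centralBinom k := rfl

lemma cb_step (a b : ℕ) (h : a ≤ b) :
    Nat.centralBinom (a+1) * Nat.centralBinom b ≤ Nat.centralBinom a * Nat.centralBinom (b+1) := by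
  have h1 := Nat.succ_mul_centralBinom_succ a
  have h2 := Nat.succ_mul_centralBinom_succ b
  have hpos : 0 < (a+1) * (b+1) := Nat.mul_pos (by omega) (by omega)
  refine Nat.le_of_mul_le_mul_left ?_ hpos
  calc (a+1)*(b+1) * (Nat.centralBinom (a+1) * Nat.centralBinom b)
      = ((a+1) * Nat.centralBinom (a+1)) * ((b+1) * Nat.centralBinom b) := by ring
    _ = (2*(2*a+1) * Nat.centralBinom a) * ((b+1) * Nat.centralBinom b) := by rw [h1]
    _ ≤ ((a+1) * Nat.centralBinom a) * (2*(2*b+1) * Nat.centralBinom b) := by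
        nlinarith [Nat.mul_le_mul_right (Nat.centralBinom a * Nat.centralBinom b) h]
    _ = ((a+1) * Nat.centralBinom a) * ((b+1) * Nat.centralBinom (b+1)) := by rw [h2]
    _ = (a+1)*(b+1) * (Nat.centralBinom a * Nat.centralBinom (b+1)) := by ring

lemma cb_shift (c k : ℕ) : ∀ b, c + k ≤ b →
    Nat.centralBinom (c+k) * Nat.centralBinom b ≤ Nat.centralBinom c * Nat.centralBinom (b+k) := by
  induction k with
  | zero => intro b _; simp
  | succ k ih =>
    intro b hb
    have h1 : c + k ≤ b := by omega
    calc Nat.centralBinom (c + (k+1)) * Nat.centralBinom b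
        = Nat.centralBinom ((c+k)+1) * Nat.centralBinom b := by
          rw [show c+(k+1) = (c+k)+1 from by omega]
      _ ≤ Nat.centralBinom (c+k) * Nat.centralBinom (b+1) := cb_step _ _ h1
      _ ≤ Nat.centralBinom c * Nat.centralBinom (b+1+k) := ih (b+1) (by omega)
      _ = Nat.centralBinom c * Nat.centralBinom (b+(k+1)) := by
          rw [show b+1+k = b+(k+1) from by omega]

lemma cb_prod_le (c a b : ℕ) (hca : c ≤ a) (hab : a ≤ b) :
    Nat.centralBinom a * Nat.centralBinom b ≤ Nat.centralBinom c * Nat.centralBinom (a + b - c) := by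
  obtain ⟨k, rfl⟩ : ∃ k, a = c + k := ⟨a - c, by omega⟩
  have h := cb_shift c k b (by omega)
  rwa [show c + k + b - c = b + k from by omega]

lemma cb_prod_le' (c a b : ℕ) (hca : c ≤ a) (hcb : c ≤ b) :
    Nat.centralBinom a * Nat.centralBinom b ≤ Nat.centralBinom c * Nat.centralBinom (a + b - c) := by
  rcases le_total a b with h | h
  · exact cb_prod_le c a b hca h
  · rw [mul_comm, show a + b - c = b + a - c from by omega]
    exact cb_prod_le c b a hcb h

lemma cb_key (m : ℕ) (hm : 4 ≤ m) :
    2 * Nat.centralBinom (m+1) + 6 * Nat.centralBinom m ≤ Nat.centralBinom (m+2) := by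
  obtain ⟨n, rfl⟩ : ∃ n, m = n + 4 := ⟨m - 4, by omega⟩
  rw [show n+4+1 = n+5 from by omega, show n+4+2 = n+6 from by omega]
  have h1 : (n+5) * Nat.centralBinom (n+5) = (4*n+18) * Nat.centralBinom (n+4) := by
    have := Nat.succ_mul_centralBinom_succ (n+4)
    rw [show n+4+1 = n+5 from by omega] at this
    rw [this]; ring
  have h2 : (n+6) * Nat.centralBinom (n+6) = (4*n+22) * Nat.centralBinom (n+5) := by
    have := Nat.succ_mul_centralBinom_succ (n+5)
    rw [show n+5+1 = n+6 from by omega] at this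
    rw [this]; ring
  have hpos : 0 < (n+5)*(n+6)*(4*n+18) :=
    Nat.mul_pos (Nat.mul_pos (by omega) (by omega)) (by omega)
  have main : (n+5)*(n+6)*(4*n+18) * (2*Nat.centralBinom (n+5)+6*Nat.centralBinom (n+4))
      ≤ (n+5)*(n+6)*(4*n+18) * Nat.centralBinom (n+6) := calc
    (n+5)*(n+6)*(4*n+18) * (2*Nat.centralBinom (n+5)+6*Nat.centralBinom (n+4))
      = 2*(n+6)*(4*n+18)*((n+5)*Nat.centralBinom (n+5))
        + 6*(n+5)*(n+6)*((4*n+18)*Nat.centralBinom (n+4)) := by ring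
    _ = 2*(n+6)*(4*n+18)*((n+5)*Nat.centralBinom (n+5))
        + 6*(n+5)*(n+6)*((n+5)*Nat.centralBinom (n+5)) := by rw [← h1]
    _ = ((n+5)*(n+6)*(14*n+66)) * Nat.centralBinom (n+5) := by ring
    _ ≤ ((n+5)*(4*n+18)*(4*n+22)) * Nat.centralBinom (n+5) :=
        Nat.mul_le_mul_right _ (by
          rw [Nat.mul_assoc, Nat.mul_assoc]
          exact Nat.mul_le_mul_left _ (by nlinarith))
    _ = (n+5)*(4*n+18)*((n+6)*Nat.centralBinom (n+6)) := by rw [h2]; ring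
    _ = (n+5)*(n+6)*(4*n+18) * Nat.centralBinom (n+6) := by ring
  exact Nat.le_of_mul_le_mul_left main hpos

/-- For all integers `g ≥ 4` and `2 ≤ t ≤ g/2`, one has
`B_{t-1}·B_{g-t} + B_t·B_{g-t-1} - 2^{g-1} < B_{g-1}`. -/
theorem bielliptic_euler_char_lt_jacobian (g t : ℕ) (hg : 4 ≤ g) (ht : 2 ≤ t)
    (htg : 2 * t ≤ g) :
    (midBinom (t - 1) : ℤ) * midBinom (g - t) + midBinom t * midBinom (g - t - 1)
      - 2 ^ (g - 1) < midBinom (g - 1) := by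
  have key : midBinom (t-1) * midBinom (g-t) + midBinom t * midBinom (g-t-1)
      < midBinom (g-1) + 2^(g-1) := by
    rcases lt_or_ge g 7 with h7 | h7
    · have ht3 : t ≤ 3 := by omega
      interval_cases g <;> interval_cases t <;> revert htg <;> decide
    · obtain ⟨s, rfl⟩ : ∃ s, t = s + 2 := ⟨t - 2, by omega⟩
      obtain ⟨d, rfl⟩ : ∃ d, g = 2*s + d + 4 := ⟨g - (2*s + 4), by omega⟩
      rw [show s + 2 - 1 = s + 1 from by omega,
          show 2*s + d + 4 - (s+2) - 1 = s + d + 1 from by omega,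
          show 2*s + d + 4 - (s+2) = s + d + 2 from by omega,
          show 2*s + d + 4 - 1 = 2*s + d + 3 from by omega]
      simp only [midBinom_eq]
      have hA : Nat.centralBinom (s+1) * Nat.centralBinom (s+d+2)
          ≤ 2 * Nat.centralBinom (2*s+d+2) := by
        have h := cb_prod_le' 1 (s+1) (s+d+2) (by omega) (by omega)
        rwa [show s+1 + (s+d+2) - 1 = 2*s+d+2 from by omega,
          show Nat.centralBinom 1 = 2 from rfl] at h
      have hB : Nat.centralBinom (s+2) * Nat.centralBinom (s+d+1)
          ≤ 6 * Nat.centralBinom (2*s+d+1) := by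
        have h := cb_prod_le' 2 (s+2) (s+d+1) (by omega) (by omega)
        rwa [show s+2 + (s+d+1) - 2 = 2*s+d+1 from by omega,
          show Nat.centralBinom 2 = 6 from rfl] at h
      have hC : 2 * Nat.centralBinom (2*s+d+2) + 6 * Nat.centralBinom (2*s+d+1)
          ≤ Nat.centralBinom (2*s+d+3) := by
        have h := cb_key (2*s+d+1) (by omega)
        rwa [show 2*s+d+1+1 = 2*s+d+2 from by omega,
          show 2*s+d+1+2 = 2*s+d+3 from by omega] at h
      have hp : 0 < 2^(2*s+d+3) := Nat.pow_pos (by omega)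
      linarith
  have key' : ((midBinom (t-1) * midBinom (g-t) + midBinom t * midBinom (g-t-1) : ℕ) : ℤ)
      < ((midBinom (g-1) + 2^(g-1) : ℕ) : ℤ) := by exact_mod_cast key
  push_cast at key'
  linarith
end
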